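/- arXiv:1303.2227 — 3 statements merged into one kernel-verified Lean document; each statement's English description precedes it below -/
import Mathlib

section
/- For all integers n ≥ 1 and a, b ≥ 0, H*_n({2}^a, 1, {2}^b, 3) = -2·∑_{k=1}^{n} (-1)^k·C(n,k)/(k^{2(a+b)+4}·C(n+k,k)) - 4·∑_{k=1}^{n} H_{k-1}(-(2b+3))·C(n,k)/(k^{2a+1}·C(n+k,k)) - 4·∑_{k=1}^{n} H_{k-1}(1)·(-1)^k·C(n,k)/(k^{2a+2b+3}·C(n+k,k)) - 8·∑_{k=1}^{n} H_{k-1}(-(2b+2), 1)·C(n,k)/(k^{2a+1}·C(n+k,k)). -/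
open Finset

/-- Sign factor for an alternating multiple harmonic sum entry. -/
def aSgn (s : ℤ) : ℚ := if 0 < s then 1 else -1

/-- Alternating multiple harmonic sum `H_n(s₁,…,s_ℓ)` (strict indices). -/
def Hh : ℕ → List ℤ → ℚ
  | _, [] => 1
  | n, s :: r => ∑ k ∈ Finset.Icc 1 n, aSgn s ^ k / (k : ℚ) ^ s.natAbs * Hh (k - 1) r

/-- Alternating multiple harmonic star sum `H*_n(s₁,…,s_ℓ)` (weak indices). -/
def Hstar : ℕ → List ℤ → ℚ
  | _, [] => 1
  | n, s :: r => ∑ k ∈ Finset.Icc 1 n, aSgn s ^ k / (k : ℚ) ^ s.natAbs * Hstar k r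

/-- All compositions (ordered tuples of positive integers) of `w`. -/
def comps : ℕ → List (List ℕ)
  | 0 => [[]]
  | (w+1) => (List.range (w+1)).flatMap (fun j => (comps (w - j)).map (fun l => (j+1) :: l))
decreasing_by simp_wf <;> omega

/-- Coerce a list of naturals to a list of integers. -/
def natList (l : List ℕ) : List ℤ := l.map (fun m => (m : ℤ))

namespace S12

def G (n k : ℕ) : ℚ := (n.choose k : ℚ) / ((n + k).choose k : ℚ)

lemma chQ_ne (n k : ℕ) : ((n + k).choose k : ℚ) ≠ 0 := by
  have := Nat.choose_pos (Nat.le_add_left k n)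
  exact_mod_cast this.ne'

lemma G_zero (n : ℕ) : G n 0 = 1 := by simp [G]

lemma icc_ioc (n : ℕ) : Finset.Icc 1 n = Finset.Ioc 0 n := Finset.Icc_add_one_left_eq_Ioc 0 n

lemma ratio {n k : ℕ} (h1 : 1 ≤ k) (h2 : k ≤ n) :
    G n k * ((n : ℚ) + k) = G n (k - 1) * ((n : ℚ) - k + 1) := by
  obtain ⟨m, rfl⟩ : ∃ m, k = m + 1 := ⟨k - 1, by omega⟩
  have hmn : m ≤ n := by omega
  have f1 : (n + m + 1) * (n + m).choose m = (n + m + 1).choose (m + 1) * (m + 1) :=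
    Nat.add_one_mul_choose_eq (n + m) m
  have f2 : n.choose (m + 1) * (m + 1) = n.choose m * (n - m) := Nat.choose_succ_right_eq n m
  have key : n.choose (m + 1) * ((n + m + 1) * (n + m).choose m)
      = n.choose m * (n - m) * ((n + m + 1).choose (m + 1)) := by
    rw [f1, ← f2]; ring
  have hadd : n + (m + 1) = n + m + 1 := by omega
  have h1q : ((n + m + 1).choose (m + 1) : ℚ) ≠ 0 := by
    rw [← hadd]; exact chQ_ne n (m + 1)
  have h2q : ((n + m).choose m : ℚ) ≠ 0 := chQ_ne n m
  have keyQ : (n.choose (m + 1) : ℚ) * (((n : ℚ) + m + 1) * ((n + m).choose m))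
      = (n.choose m : ℚ) * ((n : ℚ) - m) * ((n + m + 1).choose (m + 1) : ℚ) := by
    have := key
    qify [hmn] at this
    linear_combination this
  simp only [G, Nat.add_sub_cancel, hadd]
  field_simp
  push_cast
  linear_combination keyQ

lemma M1Q {n k : ℕ} (h1 : 1 ≤ k) (h2 : k ≤ n) :
    G n k * ((n : ℚ) + 1) ^ 2 = (((n : ℚ) + 1) ^ 2 - (k : ℚ) ^ 2) * G (n + 1) k := by
  have f3 : n.choose k * (n + 1) = (n + 1).choose k * (n + 1 - k) := Nat.choose_mul_succ_eq n k
  have f4 : (n + k).choose k * (n + k + 1) = (n + k + 1).choose k * (n + 1) := by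
    have := Nat.choose_mul_succ_eq (n + k) k
    rwa [show n + k + 1 - k = n + 1 by omega] at this
  have key : n.choose k * ((n + 1 + k).choose k) * ((n + 1) * (n + 1))
      = ((n + 1 - k) * (n + 1 + k)) * ((n + 1).choose k * ((n + k).choose k)) := by
    have hA : n + 1 + k = n + k + 1 := by omega
    rw [hA]
    calc n.choose k * ((n + k + 1).choose k) * ((n + 1) * (n + 1))
        = (n.choose k * (n + 1)) * ((n + k + 1).choose k * (n + 1)) := by ring
      _ = ((n + 1).choose k * (n + 1 - k)) * ((n + k).choose k * (n + k + 1)) := by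
          rw [f3, ← f4]
      _ = ((n + 1 - k) * (n + k + 1)) * ((n + 1).choose k * ((n + k).choose k)) := by ring
  have h1q : ((n + k).choose k : ℚ) ≠ 0 := chQ_ne n k
  have h2q : (((n + 1) + k).choose k : ℚ) ≠ 0 := chQ_ne (n + 1) k
  have hsub : ((n + 1 - k : ℕ) : ℚ) = (n : ℚ) + 1 - k := by
    push_cast [Nat.cast_sub (by omega : k ≤ n + 1)]; ring
  have keyQ : (n.choose k : ℚ) * (((n + 1 + k).choose k) : ℚ) * (((n:ℚ) + 1) * ((n:ℚ) + 1))
      = (((n:ℚ) + 1 - k) * ((n:ℚ) + 1 + k)) * (((n + 1).choose k : ℚ) * (((n + k).choose k) : ℚ)) := by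
    have := key
    qify [show k ≤ n + 1 by omega] at this
    linear_combination this
  simp only [G]
  field_simp
  linear_combination keyQ


lemma K1 {n : ℕ} : ∀ K, K ≤ n →
    ∑ k ∈ Ioc 0 K, (k : ℚ) * G n k = (((K : ℚ) - n) / 2) * G n K + n / 2
  | 0, _ => by simp [G_zero]; ring
  | (K+1), h => by
    have ih := K1 (n := n) K (by omega)
    rw [Finset.sum_Ioc_succ_top (Nat.zero_le K)]
    have hr := ratio (n := n) (k := K + 1) (by omega) h
    simp only [Nat.add_sub_cancel] at hr
    push_cast at hr ⊢
    linear_combination ih + hr / 2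

lemma K2 {n : ℕ} : ∀ K, K ≤ n →
    2 * (n : ℚ) * ∑ k ∈ Ioc 0 K, (-1 : ℚ) ^ k * G n k
      = (-1 : ℚ) ^ K * ((n : ℚ) - K) * G n K - n
  | 0, _ => by simp [G_zero]
  | (K+1), h => by
    have ih := K2 (n := n) K (by omega)
    rw [Finset.sum_Ioc_succ_top (Nat.zero_le K)]
    have hr := ratio (n := n) (k := K + 1) (by omega) h
    simp only [Nat.add_sub_cancel] at hr
    push_cast at hr ⊢
    linear_combination ih - (-1 : ℚ) ^ K * hr

lemma K1' {n j : ℕ} (hjn : j ≤ n) :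
    ∑ k ∈ Ioc j n, (k : ℚ) * G n k = (((n : ℚ) - j) / 2) * G n j := by
  have h : (∑ k ∈ Ioc 0 j, (k : ℚ) * G n k) + ∑ k ∈ Ioc j n, (k : ℚ) * G n k
      = ∑ k ∈ Ioc 0 n, (k : ℚ) * G n k :=
    Finset.sum_Ioc_consecutive _ (Nat.zero_le j) hjn
  have e1 := K1 (n := n) j hjn
  have e2 := K1 (n := n) n le_rfl
  linear_combination e2 - e1 + h

lemma K2' {n j : ℕ} (hjn : j ≤ n) :
    2 * (n : ℚ) * ∑ k ∈ Ioc j n, (-1 : ℚ) ^ k * G n k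
      = -((-1 : ℚ) ^ j * ((n : ℚ) - j) * G n j) := by
  have h : (∑ k ∈ Ioc 0 j, (-1 : ℚ) ^ k * G n k) + ∑ k ∈ Ioc j n, (-1 : ℚ) ^ k * G n k
      = ∑ k ∈ Ioc 0 n, (-1 : ℚ) ^ k * G n k :=
    Finset.sum_Ioc_consecutive _ (Nat.zero_le j) hjn
  have e1 := K2 (n := n) j hjn
  have e2 := K2 (n := n) n le_rfl
  linear_combination e2 - e1 + 2 * (n : ℚ) * h

lemma swap (F g : ℕ → ℚ) : ∀ n : ℕ,
    ∑ k ∈ Ioc 0 n, F k * (∑ j ∈ Ioc 0 (k - 1), g j)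
      = ∑ j ∈ Ioc 0 n, g j * (∑ k ∈ Ioc j n, F k)
  | 0 => by simp
  | (n+1) => by
    have ih := swap F g n
    rw [Finset.sum_Ioc_succ_top (Nat.zero_le n), Finset.sum_Ioc_succ_top (Nat.zero_le n), ih]
    have step : ∀ j ∈ Finset.Ioc 0 n,
        g j * (∑ k ∈ Ioc j (n + 1), F k)
          = g j * (∑ k ∈ Ioc j n, F k) + g j * F (n + 1) := by
      intro j hj
      rw [Finset.sum_Ioc_succ_top (Finset.mem_Ioc.mp hj).2, mul_add]
    rw [Finset.sum_congr rfl step, Finset.sum_add_distrib]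
    simp only [Nat.add_sub_cancel, Finset.Ioc_self, Finset.sum_empty, mul_zero, add_zero]
    rw [← Finset.sum_mul]
    ring


def H1 (m : ℕ) : ℚ := ∑ j ∈ Ioc 0 m, 1 / (j : ℚ)

def Ha (b m : ℕ) : ℚ := ∑ j ∈ Ioc 0 m, (-1 : ℚ) ^ j / (j : ℚ) ^ (2 * b + 3)

def Hab (b m : ℕ) : ℚ := ∑ j ∈ Ioc 0 m, (-1 : ℚ) ^ j * H1 (j - 1) / (j : ℚ) ^ (2 * b + 2)

def uw (b k : ℕ) : ℚ :=
  -2 * (-1 : ℚ) ^ k / (k : ℚ) ^ (2 * b + 3) - 4 * (-1 : ℚ) ^ k * H1 (k - 1) / (k : ℚ) ^ (2 * b + 2)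

def Uw (b k : ℕ) : ℚ :=
  -2 * (-1 : ℚ) ^ k / (k : ℚ) ^ (2 * b + 4) - 4 * Ha b (k - 1) / (k : ℚ)
    - 4 * (-1 : ℚ) ^ k * H1 (k - 1) / (k : ℚ) ^ (2 * b + 3) - 8 * Hab b (k - 1) / (k : ℚ)

def B (w : ℕ → ℚ) (n : ℕ) : ℚ := ∑ k ∈ Ioc 0 n, w k * G n k

lemma B_zero (w : ℕ → ℚ) : B w 0 = 0 := by simp [B]

lemma B_congr {w w' : ℕ → ℚ} (n : ℕ) (h : ∀ k, 1 ≤ k → w k = w' k) : B w n = B w' n := by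
  unfold B
  refine Finset.sum_congr rfl ?_
  intro k hk
  rw [h k (Finset.mem_Ioc.mp hk).1]

lemma M2 (w : ℕ → ℚ) (n : ℕ) :
    B w (n + 1) = B w n + (1 / ((n : ℚ) + 1) ^ 2) * B (fun k => (k : ℚ) ^ 2 * w k) (n + 1) := by
  have hne : ((n : ℚ) + 1) ≠ 0 := by positivity
  unfold B
  rw [Finset.mul_sum, Finset.sum_Ioc_succ_top (Nat.zero_le n),
    Finset.sum_Ioc_succ_top (Nat.zero_le n)
      (f := fun k => 1 / ((n : ℚ) + 1) ^ 2 * ((k : ℚ) ^ 2 * w k * G (n + 1) k))]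
  have step : ∀ k ∈ Finset.Ioc 0 n,
      w k * G (n + 1) k
        = w k * G n k + 1 / ((n : ℚ) + 1) ^ 2 * ((k : ℚ) ^ 2 * w k * G (n + 1) k) := by
    intro k hk
    obtain ⟨hk1, hk2⟩ := Finset.mem_Ioc.mp hk
    have hm := M1Q (n := n) (k := k) hk1 hk2
    field_simp
    linear_combination (-(w k)) * hm
  rw [Finset.sum_congr rfl step, Finset.sum_add_distrib]
  push_cast
  field_simp
  ring

lemma Sq (w : ℕ → ℚ) : ∀ n : ℕ,
    ∑ m ∈ Ioc 0 n, (1 / (m : ℚ) ^ 2) * B w m = B (fun k => w k / (k : ℚ) ^ 2) n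
  | 0 => by simp [B_zero]
  | (n+1) => by
    have ih := Sq w n
    rw [Finset.sum_Ioc_succ_top (Nat.zero_le n), ih, M2 (fun k => w k / (k : ℚ) ^ 2) n]
    have : B (fun k => (k : ℚ) ^ 2 * (w k / (k : ℚ) ^ 2)) (n + 1) = B w (n + 1) := by
      refine B_congr (n + 1) ?_
      intro k hk
      have : (k : ℚ) ≠ 0 := by positivity
      field_simp
    rw [this]
    push_cast
    ring

lemma K2d {n j : ℕ} (hn : 1 ≤ n) (hjn : j ≤ n) :
    ∑ k ∈ Ioc j n, (-1 : ℚ) ^ k * G n k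
      = -((-1 : ℚ) ^ j * ((n : ℚ) - j) * G n j) / (2 * n) := by
  have hnq : (n : ℚ) ≠ 0 := Nat.cast_ne_zero.mpr (by omega)
  rw [eq_div_iff (mul_ne_zero two_ne_zero hnq)]
  linear_combination K2' (n := n) (j := j) hjn

lemma S1' {n : ℕ} (hn : 1 ≤ n) :
    B (fun k => (k : ℚ) ^ 2 * uw 0 k) n = 1 / n := by
  have hnq : (n : ℚ) ≠ 0 := Nat.cast_ne_zero.mpr (by omega)
  unfold B
  have e1 : ∀ k ∈ Finset.Ioc 0 n,
      (k : ℚ) ^ 2 * uw 0 k * G n k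
        = (-2 / (k : ℚ)) * ((-1 : ℚ) ^ k * G n k)
          + ((-4) * ((-1 : ℚ) ^ k * G n k)) * (∑ j ∈ Ioc 0 (k - 1), 1 / (j : ℚ)) := by
    intro k hk
    have hk1 := (Finset.mem_Ioc.mp hk).1
    have hkq : (k : ℚ) ≠ 0 := by positivity
    unfold uw H1
    field_simp
    ring
  rw [Finset.sum_congr rfl e1, Finset.sum_add_distrib]
  rw [swap (fun k => (-4) * ((-1 : ℚ) ^ k * G n k)) (fun j => 1 / (j : ℚ)) n]
  have e2 : ∀ j ∈ Finset.Ioc 0 n,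
      1 / (j : ℚ) * (∑ k ∈ Ioc j n, (-4) * ((-1 : ℚ) ^ k * G n k))
        = (2 / ((j : ℚ) * n)) * ((-1 : ℚ) ^ j * ((n : ℚ) - j) * G n j) := by
    intro j hj
    obtain ⟨hj1, hj2⟩ := Finset.mem_Ioc.mp hj
    have hjq : (j : ℚ) ≠ 0 := Nat.cast_ne_zero.mpr (by omega)
    have : ∑ k ∈ Ioc j n, (-4) * ((-1 : ℚ) ^ k * G n k)
        = (-4) * ∑ k ∈ Ioc j n, (-1 : ℚ) ^ k * G n k := by
      rw [Finset.mul_sum]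
    rw [this, K2d (n := n) (j := j) hn hj2]
    field_simp
    ring
  rw [Finset.sum_congr rfl e2]
  have e3 : ∀ j ∈ Finset.Ioc 0 n,
      (-2 / (j : ℚ)) * ((-1 : ℚ) ^ j * G n j)
        + (2 / ((j : ℚ) * n)) * ((-1 : ℚ) ^ j * ((n : ℚ) - j) * G n j)
        = (-2 / (n : ℚ)) * ((-1 : ℚ) ^ j * G n j) := by
    intro j hj
    obtain ⟨hj1, hj2⟩ := Finset.mem_Ioc.mp hj
    have hjq : (j : ℚ) ≠ 0 := Nat.cast_ne_zero.mpr (by omega)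
    field_simp
    ring
  rw [← Finset.sum_add_distrib, Finset.sum_congr rfl e3, ← Finset.mul_sum]
  have hk2n := K2 (n := n) n le_rfl
  have hsum : ∑ k ∈ Ioc 0 n, (-1 : ℚ) ^ k * G n k = -1 / 2 :=
    mul_left_cancel₀ (mul_ne_zero two_ne_zero hnq) (by linear_combination hk2n)
  rw [hsum]
  field_simp


lemma Hstar_three (n : ℕ) : Hstar n [3] = ∑ k ∈ Ioc 0 n, 1 / (k : ℚ) ^ 3 := by
  rw [Hstar, icc_ioc]
  refine Finset.sum_congr rfl ?_
  intro k _
  rw [Hstar]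
  norm_num [aSgn]

lemma Hstar_two_cons (n : ℕ) (l : List ℤ) :
    Hstar n (2 :: l) = ∑ m ∈ Ioc 0 n, (1 / (m : ℚ) ^ 2) * Hstar m l := by
  rw [Hstar, icc_ioc]
  refine Finset.sum_congr rfl ?_
  intro m _
  norm_num [aSgn]

lemma Hstar_one_cons (n : ℕ) (l : List ℤ) :
    Hstar n (1 :: l) = ∑ m ∈ Ioc 0 n, (1 / (m : ℚ)) * Hstar m l := by
  rw [Hstar, icc_ioc]
  refine Finset.sum_congr rfl ?_
  intro m _
  norm_num [aSgn]

lemma T1 : ∀ n : ℕ, Hstar n [3] = B (uw 0) n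
  | 0 => by rw [Hstar_three]; simp [B_zero]
  | (n+1) => by
    have ih := T1 n
    have hq : ((n : ℚ) + 1) ≠ 0 := by positivity
    rw [Hstar_three, Finset.sum_Ioc_succ_top (Nat.zero_le n), ← Hstar_three, ih,
      M2 (uw 0) n]
    have hS := S1' (n := n + 1) (by omega)
    push_cast at hS ⊢
    rw [hS]
    field_simp

lemma T2 (b : ℕ) (n : ℕ) : Hstar n (List.replicate b 2 ++ [3]) = B (uw b) n := by
  induction b generalizing n with
  | zero => simpa using T1 n
  | succ b ih =>
    rw [List.replicate_succ, List.cons_append, Hstar_two_cons]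
    have e : ∀ m ∈ Finset.Ioc 0 n,
        (1 / (m : ℚ) ^ 2) * Hstar m (List.replicate b 2 ++ [3])
          = (1 / (m : ℚ) ^ 2) * B (uw b) m := by
      intro m _
      rw [ih m]
    rw [Finset.sum_congr rfl e, Sq (uw b) n]
    refine B_congr n ?_
    intro k hk
    have hkq : (k : ℚ) ≠ 0 := Nat.cast_ne_zero.mpr (by omega)
    unfold uw
    have h1 : (k : ℚ) ^ (2 * (b + 1) + 3) = (k : ℚ) ^ (2 * b + 3) * (k : ℚ) ^ 2 := by
      rw [← pow_add]
      congr 1 <;> omega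
    have h2 : (k : ℚ) ^ (2 * (b + 1) + 2) = (k : ℚ) ^ (2 * b + 2) * (k : ℚ) ^ 2 := by
      rw [← pow_add]
      congr 1 <;> omega
    rw [h1, h2]
    field_simp


lemma Ccrux (b : ℕ) {n : ℕ} (hn : 1 ≤ n) :
    B (fun k => (k : ℚ) ^ 2 * Uw b k) n = (n : ℚ) * B (uw b) n := by
  unfold B
  rw [Finset.mul_sum]
  have e1 : ∀ k ∈ Finset.Ioc 0 n,
      (k : ℚ) ^ 2 * Uw b k * G n k
        = (-2 * (-1 : ℚ) ^ k / (k : ℚ) ^ (2 * b + 2)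
            - 4 * (-1 : ℚ) ^ k * H1 (k - 1) / (k : ℚ) ^ (2 * b + 1)) * G n k
          + ((-4) * (k : ℚ) * G n k) * (∑ j ∈ Ioc 0 (k - 1), (-1 : ℚ) ^ j / (j : ℚ) ^ (2 * b + 3))
          + ((-8) * (k : ℚ) * G n k)
              * (∑ j ∈ Ioc 0 (k - 1), (-1 : ℚ) ^ j * H1 (j - 1) / (j : ℚ) ^ (2 * b + 2)) := by
    intro k hk
    obtain ⟨hk1, _⟩ := Finset.mem_Ioc.mp hk
    have hkq : (k : ℚ) ≠ 0 := Nat.cast_ne_zero.mpr (by omega)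
    unfold Uw Ha Hab
    have p1 : (k : ℚ) ^ (2 * b + 4) = (k : ℚ) ^ (2 * b + 1) * (k : ℚ) ^ 3 := by
      rw [← pow_add]
    have p2 : (k : ℚ) ^ (2 * b + 3) = (k : ℚ) ^ (2 * b + 1) * (k : ℚ) ^ 2 := by
      rw [← pow_add]
    have p3 : (k : ℚ) ^ (2 * b + 2) = (k : ℚ) ^ (2 * b + 1) * (k : ℚ) := pow_succ _ _
    rw [p1, p2, p3]
    have hK : (k : ℚ) ^ (2 * b + 1) ≠ 0 := pow_ne_zero _ hkq
    field_simp
    ring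
  rw [Finset.sum_congr rfl e1, Finset.sum_add_distrib, Finset.sum_add_distrib]
  rw [swap (fun k => (-4) * (k : ℚ) * G n k)
        (fun j => (-1 : ℚ) ^ j / (j : ℚ) ^ (2 * b + 3)) n,
      swap (fun k => (-8) * (k : ℚ) * G n k)
        (fun j => (-1 : ℚ) ^ j * H1 (j - 1) / (j : ℚ) ^ (2 * b + 2)) n]
  have e2 : ∀ j ∈ Finset.Ioc 0 n,
      ((-1 : ℚ) ^ j / (j : ℚ) ^ (2 * b + 3)) * (∑ k ∈ Ioc j n, (-4) * (k : ℚ) * G n k)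
        = ((-1 : ℚ) ^ j / (j : ℚ) ^ (2 * b + 3)) * ((-4) * ((((n : ℚ) - j) / 2) * G n j)) := by
    intro j hj
    obtain ⟨_, hj2⟩ := Finset.mem_Ioc.mp hj
    have : ∑ k ∈ Ioc j n, (-4) * (k : ℚ) * G n k
        = (-4) * ∑ k ∈ Ioc j n, (k : ℚ) * G n k := by
      rw [Finset.mul_sum]
      exact Finset.sum_congr rfl fun k _ => by ring
    rw [this, K1' (n := n) (j := j) hj2]
  have e3 : ∀ j ∈ Finset.Ioc 0 n,
      ((-1 : ℚ) ^ j * H1 (j - 1) / (j : ℚ) ^ (2 * b + 2))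
          * (∑ k ∈ Ioc j n, (-8) * (k : ℚ) * G n k)
        = ((-1 : ℚ) ^ j * H1 (j - 1) / (j : ℚ) ^ (2 * b + 2))
            * ((-8) * ((((n : ℚ) - j) / 2) * G n j)) := by
    intro j hj
    obtain ⟨_, hj2⟩ := Finset.mem_Ioc.mp hj
    have : ∑ k ∈ Ioc j n, (-8) * (k : ℚ) * G n k
        = (-8) * ∑ k ∈ Ioc j n, (k : ℚ) * G n k := by
      rw [Finset.mul_sum]
      exact Finset.sum_congr rfl fun k _ => by ring
    rw [this, K1' (n := n) (j := j) hj2]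
  rw [Finset.sum_congr rfl e2, Finset.sum_congr rfl e3,
    ← Finset.sum_add_distrib, ← Finset.sum_add_distrib]
  refine Finset.sum_congr rfl ?_
  intro j hj
  obtain ⟨hj1, _⟩ := Finset.mem_Ioc.mp hj
  have hjq : (j : ℚ) ≠ 0 := Nat.cast_ne_zero.mpr (by omega)
  unfold uw
  have p2 : (j : ℚ) ^ (2 * b + 3) = (j : ℚ) ^ (2 * b + 1) * (j : ℚ) ^ 2 := by
    rw [← pow_add]
  have p3 : (j : ℚ) ^ (2 * b + 2) = (j : ℚ) ^ (2 * b + 1) * (j : ℚ) := pow_succ _ _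
  rw [p2, p3]
  have hK : (j : ℚ) ^ (2 * b + 1) ≠ 0 := pow_ne_zero _ hjq
  field_simp
  ring

lemma a0 (b : ℕ) : ∀ n : ℕ, Hstar n (1 :: (List.replicate b 2 ++ [3])) = B (Uw b) n
  | 0 => by rw [Hstar_one_cons]; simp [B_zero]
  | (n+1) => by
    have ih := a0 b n
    have hq : ((n : ℚ) + 1) ≠ 0 := by positivity
    rw [Hstar_one_cons, Finset.sum_Ioc_succ_top (Nat.zero_le n), ← Hstar_one_cons, ih,
      T2 b (n + 1), M2 (Uw b) n]
    have hc := Ccrux b (n := n + 1) (by omega)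
    rw [hc]
    push_cast
    field_simp

lemma main (b a n : ℕ) :
    Hstar n (List.replicate a 2 ++ (1 :: (List.replicate b 2 ++ [3])))
      = B (fun k => Uw b k / (k : ℚ) ^ (2 * a)) n := by
  induction a generalizing n with
  | zero =>
    rw [List.replicate_zero, List.nil_append, a0 b n]
    refine B_congr n ?_
    intro k _
    norm_num
  | succ a ih =>
    rw [List.replicate_succ, List.cons_append, Hstar_two_cons]
    have e : ∀ m ∈ Finset.Ioc 0 n,
        (1 / (m : ℚ) ^ 2) * Hstar m (List.replicate a 2 ++ (1 :: (List.replicate b 2 ++ [3])))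
          = (1 / (m : ℚ) ^ 2) * B (fun k => Uw b k / (k : ℚ) ^ (2 * a)) m := by
      intro m _
      rw [ih m]
    rw [Finset.sum_congr rfl e, Sq _ n]
    refine B_congr n ?_
    intro k hk
    have hkq : (k : ℚ) ≠ 0 := Nat.cast_ne_zero.mpr (by omega)
    have p1 : (k : ℚ) ^ (2 * (a + 1)) = (k : ℚ) ^ (2 * a) * (k : ℚ) ^ 2 := by
      rw [← pow_add]
      congr 1 <;> omega
    rw [p1, div_div]

lemma Hh_one (m : ℕ) : Hh m [1] = H1 m := by
  rw [Hh, H1, icc_ioc]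
  refine Finset.sum_congr rfl ?_
  intro j _
  rw [Hh]
  norm_num [aSgn]

lemma Hh_a (b m : ℕ) : Hh m [-(2 * (b : ℤ) + 3)] = Ha b m := by
  rw [Hh, Ha, icc_ioc]
  refine Finset.sum_congr rfl ?_
  intro j _
  rw [Hh]
  have h1 : aSgn (-(2 * (b : ℤ) + 3)) = -1 := by
    rw [aSgn, if_neg]
    omega
  have h2 : (-(2 * (b : ℤ) + 3)).natAbs = 2 * b + 3 := by omega
  rw [h1, h2]
  ring

lemma Hh_ab (b m : ℕ) : Hh m [-(2 * (b : ℤ) + 2), 1] = Hab b m := by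
  rw [Hh, Hab, icc_ioc]
  refine Finset.sum_congr rfl ?_
  intro j _
  rw [Hh_one]
  have h1 : aSgn (-(2 * (b : ℤ) + 2)) = -1 := by
    rw [aSgn, if_neg]
    omega
  have h2 : (-(2 * (b : ℤ) + 2)).natAbs = 2 * b + 2 := by omega
  rw [h1, h2]
  ring

end S12

theorem stmt12 (n a b : ℕ) (hn : 1 ≤ n) :
    Hstar n (List.replicate a 2 ++ [1] ++ List.replicate b 2 ++ [3])
      = -2 * ∑ k ∈ Finset.Icc 1 n,
            (-1 : ℚ) ^ k * (n.choose k) / ((k : ℚ) ^ (2*(a+b)+4) * ((n+k).choose k))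
        - 4 * ∑ k ∈ Finset.Icc 1 n,
            Hh (k-1) [-(2 * (b : ℤ) + 3)] * (n.choose k)
              / ((k : ℚ) ^ (2*a+1) * ((n+k).choose k))
        - 4 * ∑ k ∈ Finset.Icc 1 n,
            Hh (k-1) [1] * (-1 : ℚ) ^ k * (n.choose k)
              / ((k : ℚ) ^ (2*a+2*b+3) * ((n+k).choose k))
        - 8 * ∑ k ∈ Finset.Icc 1 n,
            Hh (k-1) [-(2 * (b : ℤ) + 2), 1] * (n.choose k)
              / ((k : ℚ) ^ (2*a+1) * ((n+k).choose k)) := by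
  have hl : List.replicate a 2 ++ [1] ++ List.replicate b 2 ++ [3]
      = List.replicate a 2 ++ ((1 : ℤ) :: (List.replicate b 2 ++ [3])) := by
    simp [List.append_assoc]
  rw [hl, S12.main b a n]
  unfold S12.B
  simp only [S12.icc_ioc]
  rw [Finset.mul_sum, Finset.mul_sum, Finset.mul_sum, Finset.mul_sum,
    ← Finset.sum_sub_distrib, ← Finset.sum_sub_distrib, ← Finset.sum_sub_distrib]
  refine Finset.sum_congr rfl ?_
  intro k hk
  obtain ⟨hk1, _⟩ := Finset.mem_Ioc.mp hk
  have hkq : (k : ℚ) ≠ 0 := Nat.cast_ne_zero.mpr (by omega)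
  rw [S12.Hh_one, S12.Hh_a, S12.Hh_ab]
  unfold S12.Uw S12.G
  have q1 : (k : ℚ) ^ (2*(a+b)+4) = (k : ℚ) ^ (2*b+4) * (k : ℚ) ^ (2*a) := by
    rw [← pow_add]
    congr 1 <;> omega
  have q3 : (k : ℚ) ^ (2*a+2*b+3) = (k : ℚ) ^ (2*b+3) * (k : ℚ) ^ (2*a) := by
    rw [← pow_add]
    congr 1 <;> omega
  have q2 : (k : ℚ) ^ (2*a+1) = (k : ℚ) ^ (2*a) * (k : ℚ) := pow_succ _ _
  rw [q1, q2, q3]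
  have hG := S12.chQ_ne n k
  have hA : (k : ℚ) ^ (2*a) ≠ 0 := pow_ne_zero _ hkq
  have hB4 : (k : ℚ) ^ (2*b+4) ≠ 0 := pow_ne_zero _ hkq
  have hB3 : (k : ℚ) ^ (2*b+3) ≠ 0 := pow_ne_zero _ hkq
  field_simp
end

section
/- For all integers n ≥ 1, a ≥ 0, c ≥ 1, H*_n({1}^a, c) = -∑_{k=1}^{n} (-1)^k·C(n,k)·H_{k-1}(q_2,...,q_m)/k^{q_1}, summed over all compositions (q_1,...,q_m) obtained from the string (a+1, 1, 1, ..., 1) (with c-1 ones following a+1) by replacing each comma independently either by a comma or by addition of adjacent entries; equivalently, H*_n({1}^a, c) = -∑ over all tuples (q_1,...,q_m) with q_1 ≥ a+1, q_2,...,q_m ≥ 1 and q_1 + ... + q_m = a + c, of ∑_{k=1}^{n} (-1)^k·C(n,k)·H_{k-1}(q_2,...,q_m)/k^{q_1}. -/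
open Finset

/-! Auxiliary definitions -/

def Hq : ℕ → List ℕ → ℚ
  | _, [] => 1
  | n, s :: r => ∑ k ∈ Finset.Icc 1 n, Hq (k - 1) r / (k : ℚ) ^ s

def Hs : ℕ → List ℕ → ℚ
  | _, [] => 1
  | n, s :: r => ∑ k ∈ Finset.Icc 1 n, Hs k r / (k : ℚ) ^ s

def Sb (n p : ℕ) (q : List ℕ) : ℚ :=
  ∑ k ∈ Finset.Icc 1 n, (-1 : ℚ) ^ (k-1) * (n.choose k) * Hq (k-1) q / (k : ℚ) ^ p

def Phi (n p w : ℕ) : ℚ :=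
  ∑ i ∈ Finset.range (w+1), ((comps (w - i)).map (fun q => Sb n (p+i) q)).sum

/-! Generic sum helpers -/

lemma sum_Icc_swap (n : ℕ) (f : ℕ → ℕ → ℚ) :
    ∑ k ∈ Icc 1 n, ∑ j ∈ Icc k n, f k j = ∑ j ∈ Icc 1 n, ∑ k ∈ Icc 1 j, f k j := by
  rw [Finset.sum_comm']
  intro i j
  simp only [mem_Icc]; omega

lemma list_range_sum (m : ℕ) (F : ℕ → ℚ) :
    ((List.range m).map F).sum = ∑ i ∈ Finset.range m, F i := by
  induction m with
  | zero => simp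
  | succ m ih => rw [List.range_succ, Finset.sum_range_succ]; simp [ih]

lemma list_sum_comm {α β : Type*} (l : List α) (s : Finset β) (g : β → α → ℚ) :
    (l.map (fun q => ∑ j ∈ s, g j q)).sum = ∑ j ∈ s, (l.map (g j)).sum := by
  induction l with
  | nil => simp
  | cons x l ih => simp [ih, Finset.sum_add_distrib]

lemma list_sum_div {α : Type*} (l : List α) (h : α → ℚ) (d : ℚ) :
    (l.map (fun q => h q / d)).sum = (l.map h).sum / d := by
  induction l with
  | nil => simp
  | cons x l ih => simp [ih, add_div]

lemma list_sum_neg {α : Type*} (l : List α) (h : α → ℚ) :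
    (l.map (fun q => -h q)).sum = -(l.map h).sum := by
  induction l with
  | nil => simp
  | cons x l ih => simp [ih]; ring

/-! Binomial lemmas -/

lemma alt_partial (j : ℕ) (hj : 1 ≤ j) (m : ℕ) :
    ∑ k ∈ range (m+1), (-1 : ℚ)^k * (j.choose k) = (-1)^m * ((j-1).choose m) := by
  induction m with
  | zero => simp
  | succ m ih =>
      rw [Finset.sum_range_succ, ih]
      have h : (j-1).choose (m+1) + (j-1).choose m = j.choose (m+1) := by
        have := Nat.choose_succ_succ (j-1) m
        have hj' : j - 1 + 1 = j := by omega
        simp only [Nat.succ_eq_add_one, hj'] at this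
        omega
      have h' : ((j-1).choose (m+1) : ℚ) + (j-1).choose m = j.choose (m+1) := by
        exact_mod_cast congrArg (Nat.cast : ℕ → ℚ) h
      rw [pow_succ]
      linear_combination ((-1:ℚ)^m) * h'

lemma choose_div_telescope (k : ℕ) (hk : 1 ≤ k) (n : ℕ) :
    ((n.choose k : ℚ))/k = ∑ j ∈ Icc k n, (j.choose k : ℚ)/j := by
  induction n with
  | zero =>
      rw [Nat.choose_eq_zero_of_lt hk]
      rw [Finset.Icc_eq_empty (by omega)]
      simp
  | succ n ih =>
      by_cases hkn : k ≤ n + 1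
      · rw [show Icc k (n+1) = insert (n+1) (Icc k n) by
          ext x; simp only [Finset.mem_insert, mem_Icc]; omega]
        rw [Finset.sum_insert (by simp)]
        rw [← ih]
        obtain ⟨k', rfl⟩ : ∃ k', k = k' + 1 := ⟨k - 1, by omega⟩
        have h1 : (n+1).choose (k'+1) = n.choose k' + n.choose (k'+1) :=
          Nat.choose_succ_succ n k'
        have h2 : (n+1) * n.choose k' = (n+1).choose (k'+1) * (k'+1) := by
          rw [← Nat.add_one_mul_choose_eq]
        have h1' : (((n+1).choose (k'+1) : ℚ)) = n.choose k' + n.choose (k'+1) := by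
          exact_mod_cast congrArg (Nat.cast : ℕ → ℚ) h1
        have h2' : ((n:ℚ)+1) * n.choose k' = (n+1).choose (k'+1) * ((k':ℚ)+1) := by
          exact_mod_cast congrArg (Nat.cast : ℕ → ℚ) h2
        have hk0 : ((k':ℚ)+1) ≠ 0 := by positivity
        have hn0 : ((n:ℚ)+1) ≠ 0 := by positivity
        push_cast
        field_simp
        linear_combination ((n:ℚ)+1)*h1' + h2'
      · rw [Nat.choose_eq_zero_of_lt (by omega)]
        rw [Finset.Icc_eq_empty (by omega)]
        simp


lemma key_swap (n : ℕ) (g : ℕ → ℚ) :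
    ∑ k ∈ Icc 1 n, (n.choose k : ℚ)/k * g k
      = ∑ j ∈ Icc 1 n, (1/(j:ℚ)) * ∑ k ∈ Icc 1 j, (j.choose k : ℚ) * g k := by
  have step1 : ∑ k ∈ Icc 1 n, (n.choose k : ℚ)/k * g k
      = ∑ k ∈ Icc 1 n, ∑ j ∈ Icc k n, (j.choose k : ℚ)/j * g k := by
    refine Finset.sum_congr rfl fun k hk => ?_
    rw [mem_Icc] at hk
    rw [← Finset.sum_mul, ← choose_div_telescope k hk.1 n]
  rw [step1, sum_Icc_swap]
  refine Finset.sum_congr rfl fun j hj => ?_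
  rw [Finset.mul_sum]
  refine Finset.sum_congr rfl fun k hk => ?_
  ring

lemma Sb_succ (n p : ℕ) (q : List ℕ) :
    Sb n (p+1) q = ∑ j ∈ Icc 1 n, Sb j p q / j := by
  have h : Sb n (p+1) q
      = ∑ k ∈ Icc 1 n, (n.choose k : ℚ)/k * ((-1:ℚ)^(k-1) * Hq (k-1) q / (k:ℚ)^p) := by
    refine Finset.sum_congr rfl fun k hk => ?_
    rw [pow_succ]
    ring
  rw [h, key_swap]
  refine Finset.sum_congr rfl fun j hj => ?_
  rw [Sb, Finset.mul_sum, Finset.sum_div]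
  refine Finset.sum_congr rfl fun k hk => ?_
  ring

lemma range_succ_eq_insert (j : ℕ) : range (j+1) = insert 0 (Icc 1 j) := by
  ext x; simp only [Finset.mem_insert, mem_range, mem_Icc]; omega

lemma alt_full (j : ℕ) (hj : 1 ≤ j) :
    ∑ k ∈ Icc 1 j, (-1:ℚ)^(k-1) * (j.choose k) = 1 := by
  have h := alt_partial j hj j
  have hz : (j-1).choose j = 0 := Nat.choose_eq_zero_of_lt (by omega)
  rw [hz, range_succ_eq_insert, Finset.sum_insert (by simp)] at h
  norm_num at h
  have h2 : ∑ k ∈ Icc 1 j, (-1:ℚ)^k * (j.choose k) = -1 := by linarith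
  have h3 : ∑ k ∈ Icc 1 j, (-1:ℚ)^(k-1) * (j.choose k)
      = ∑ k ∈ Icc 1 j, -((-1:ℚ)^k * (j.choose k)) := by
    refine Finset.sum_congr rfl fun k hk => ?_
    rw [mem_Icc] at hk
    obtain ⟨k', rfl⟩ : ∃ k', k = k' + 1 := ⟨k - 1, by omega⟩
    simp only [Nat.add_sub_cancel, pow_succ]
    ring
  rw [h3, Finset.sum_neg_distrib, h2]
  norm_num

lemma Sb_zero_nil (j : ℕ) (hj : 1 ≤ j) : Sb j 0 [] = 1 := by
  rw [Sb]
  refine Eq.trans (Finset.sum_congr rfl fun k hk => ?_) (alt_full j hj)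
  simp [Hq]

lemma sum_Icc_swap' (n : ℕ) (f : ℕ → ℕ → ℚ) :
    ∑ k ∈ Icc 1 n, ∑ m ∈ Icc 1 (k-1), f k m
      = ∑ m ∈ Icc 1 n, ∑ k ∈ Icc (m+1) n, f k m := by
  rw [Finset.sum_comm']
  intro i j
  simp only [mem_Icc]; omega

lemma alt_tail (j m : ℕ) (hj : 1 ≤ j) (hm : m ≤ j) :
    ∑ k ∈ Icc (m+1) j, (-1:ℚ)^(k-1) * (j.choose k) = (-1)^m * ((j-1).choose m) := by
  have hfull := alt_partial j hj j
  have hpart := alt_partial j hj m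
  have hz : (j-1).choose j = 0 := Nat.choose_eq_zero_of_lt (by omega)
  rw [hz] at hfull
  have hsplit : range (j+1) = range (m+1) ∪ Icc (m+1) j := by
    ext x; simp only [Finset.mem_union, mem_range, mem_Icc]; omega
  have hdisj : Disjoint (range (m+1)) (Icc (m+1) j) := by
    rw [Finset.disjoint_left]
    intro x hx hx'
    simp only [mem_range] at hx
    simp only [mem_Icc] at hx'
    omega
  rw [hsplit, Finset.sum_union hdisj, hpart] at hfull
  have h2 : ∑ k ∈ Icc (m+1) j, (-1:ℚ)^k * (j.choose k) = -((-1)^m * ((j-1).choose m)) := by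
    norm_num at hfull; linarith
  have h3 : ∑ k ∈ Icc (m+1) j, (-1:ℚ)^(k-1) * (j.choose k)
      = ∑ k ∈ Icc (m+1) j, -((-1:ℚ)^k * (j.choose k)) := by
    refine Finset.sum_congr rfl fun k hk => ?_
    rw [mem_Icc] at hk
    obtain ⟨k', rfl⟩ : ∃ k', k = k' + 1 := ⟨k - 1, by omega⟩
    simp only [Nat.add_sub_cancel, pow_succ]
    ring
  rw [h3, Finset.sum_neg_distrib, h2]
  ring

lemma Sb_zero_cons (j : ℕ) (hj : 1 ≤ j) (q1 : ℕ) (q' : List ℕ) :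
    Sb j 0 (q1 :: q') = - Sb (j-1) q1 q' := by
  have h : Sb j 0 (q1 :: q')
      = ∑ k ∈ Icc 1 j, ∑ m ∈ Icc 1 (k-1),
          ((-1:ℚ)^(k-1) * (j.choose k)) * (Hq (m-1) q' / (m:ℚ)^q1) := by
    rw [Sb]
    refine Finset.sum_congr rfl fun k hk => ?_
    rw [Hq, pow_zero, div_one, Finset.mul_sum]
  rw [h, sum_Icc_swap']
  have h2 : ∀ m ∈ Icc 1 j,
      ∑ k ∈ Icc (m+1) j, ((-1:ℚ)^(k-1) * (j.choose k)) * (Hq (m-1) q' / (m:ℚ)^q1)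
        = ((-1:ℚ)^m * ((j-1).choose m)) * (Hq (m-1) q' / (m:ℚ)^q1) := by
    intro m hm
    rw [mem_Icc] at hm
    rw [← Finset.sum_mul, alt_tail j m hj hm.2]
  have h4 : ∑ m ∈ Icc 1 j,
      ∑ k ∈ Icc (m+1) j, ((-1:ℚ)^(k-1) * (j.choose k)) * (Hq (m-1) q' / (m:ℚ)^q1)
        = ∑ m ∈ Icc 1 j, ((-1:ℚ)^m * ((j-1).choose m)) * (Hq (m-1) q' / (m:ℚ)^q1) :=
    Finset.sum_congr rfl h2
  rw [h4, Sb, ← Finset.sum_neg_distrib]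
  rw [show Icc 1 j = insert j (Icc 1 (j-1)) by
    ext x; simp only [Finset.mem_insert, mem_Icc]; omega]
  rw [Finset.sum_insert (by rw [mem_Icc]; omega)]
  rw [Nat.choose_eq_zero_of_lt (by omega)]
  rw [show ∀ x : ℚ, (-1:ℚ)^j * (0:ℕ) * x = 0 by intro x; norm_num]
  rw [zero_add]
  refine Finset.sum_congr rfl fun m hm => ?_
  rw [mem_Icc] at hm
  obtain ⟨m', rfl⟩ : ∃ m', m = m' + 1 := ⟨m - 1, by omega⟩
  simp only [Nat.add_sub_cancel, pow_succ]
  ring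

lemma comps_zero : comps 0 = [[]] := by rw [comps]

lemma comps_succ (w : ℕ) : comps (w+1)
    = (List.range (w+1)).flatMap (fun j => (comps (w - j)).map (fun l => (j+1) :: l)) := by
  rw [comps]

lemma comps_pos : ∀ w : ℕ, ∀ q ∈ comps w, ∀ x ∈ q, 1 ≤ x := by
  intro w
  induction w using Nat.strong_induction_on with
  | _ w ih =>
    match w with
    | 0 =>
        intro q hq
        rw [comps_zero] at hq
        simp at hq
        subst hq
        simp
    | (w+1) =>
        intro q hq
        rw [comps_succ] at hq
        simp only [List.mem_flatMap, List.mem_map, List.mem_range] at hq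
        obtain ⟨j, hj, l, hl, rfl⟩ := hq
        intro x hx
        rcases List.mem_cons.mp hx with h | h
        · omega
        · exact ih (w - j) (by omega) l hl x h

lemma comps_map_sum (w : ℕ) (f : List ℕ → ℚ) :
    ((comps (w+1)).map f).sum
      = ∑ i ∈ Finset.range (w+1), ((comps (w-i)).map (fun q => f ((i+1) :: q))).sum := by
  rw [comps_succ, ← list_range_sum]
  rw [List.map_flatMap]
  rw [List.flatMap_def, List.sum_flatten, List.map_map]
  congr 1
  refine List.map_congr_left fun i hi => ?_
  show (List.map f (List.map (fun l => (i + 1) :: l) (comps (w - i)))).sum = _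
  rw [List.map_map]
  rfl

lemma Phi_succ (n p w : ℕ) :
    Phi n (p+1) w = ∑ j ∈ Icc 1 n, Phi j p w / j := by
  unfold Phi
  have key : ∀ i : ℕ,
      ((comps (w-i)).map (fun q => Sb n (p+1+i) q)).sum
        = ∑ j ∈ Icc 1 n, ((comps (w-i)).map (fun q => Sb j (p+i) q)).sum / j := by
    intro i
    have e1 : (fun q => Sb n (p+1+i) q) = fun q => ∑ j ∈ Icc 1 n, Sb j (p+i) q / j := by
      funext q
      rw [show p+1+i = (p+i)+1 by omega]
      exact Sb_succ n (p+i) q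
    rw [e1, list_sum_comm]
    exact Finset.sum_congr rfl fun j _ => list_sum_div _ _ _
  calc ∑ i ∈ range (w+1), ((comps (w-i)).map (fun q => Sb n (p+1+i) q)).sum
      = ∑ i ∈ range (w+1), ∑ j ∈ Icc 1 n,
          ((comps (w-i)).map (fun q => Sb j (p+i) q)).sum / j :=
        Finset.sum_congr rfl fun i _ => key i
    _ = ∑ j ∈ Icc 1 n, ∑ i ∈ range (w+1),
          ((comps (w-i)).map (fun q => Sb j (p+i) q)).sum / j := Finset.sum_comm
    _ = ∑ j ∈ Icc 1 n, (∑ i ∈ range (w+1),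
          ((comps (w-i)).map (fun q => Sb j (p+i) q)).sum) / j := by
        exact Finset.sum_congr rfl fun j _ => (Finset.sum_div _ _ _).symm

lemma Hs_single (n m : ℕ) : Hs n [m] = ∑ k ∈ Icc 1 n, 1/(k:ℚ)^m := by
  rw [Hs]
  refine Finset.sum_congr rfl fun k hk => ?_
  rw [show Hs k [] = 1 from rfl]

lemma Hs_single_diff (j m : ℕ) (hj : 1 ≤ j) :
    Hs j [m] - Hs (j-1) [m] = 1/(j:ℚ)^m := by
  rw [Hs_single, Hs_single]
  rw [show Icc 1 j = insert j (Icc 1 (j-1)) by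
    ext x; simp only [Finset.mem_insert, mem_Icc]; omega]
  rw [Finset.sum_insert (by rw [mem_Icc]; omega)]
  ring

lemma Phi_one : ∀ w n : ℕ, Phi n 1 w = Hs n [w+1] := by
  intro w
  induction w with
  | zero =>
      intro n
      unfold Phi
      rw [Finset.sum_range_one]
      rw [show (0:ℕ) - 0 = 0 from rfl, comps_zero]
      simp only [List.map_cons, List.map_nil, List.sum_cons, List.sum_nil, add_zero]
      rw [show (1:ℕ) + 0 = 0 + 1 from rfl, Sb_succ]
      rw [Hs_single]
      refine Finset.sum_congr rfl fun j hj => ?_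
      rw [mem_Icc] at hj
      rw [Sb_zero_nil j hj.1]
      rw [pow_one]
  | succ w ih =>
      intro n
      unfold Phi
      rw [Finset.sum_range_succ']
      -- term i = 0 :
      have h0 : ((comps (w+1-0)).map (fun q => Sb n (1+0) q)).sum
          = ∑ j ∈ Icc 1 n, (-(Hs (j-1) [w+1])) / j := by
        have e1 : (fun q => Sb n (1+0) q) = fun q => ∑ j ∈ Icc 1 n, Sb j 0 q / j := by
          funext q
          exact Sb_succ n 0 q
        rw [show w+1-0 = w+1 from rfl, e1, list_sum_comm]
        refine Finset.sum_congr rfl fun j hj => ?_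
        rw [mem_Icc] at hj
        rw [list_sum_div]
        congr 1
        rw [comps_map_sum]
        have e2 : ∀ i ∈ range (w+1),
            ((comps (w-i)).map (fun q => Sb j 0 ((i+1) :: q))).sum
              = ((comps (w-i)).map (fun q => -Sb (j-1) (i+1) q)).sum := by
          intro i hi
          congr 1
          refine List.map_congr_left fun q hq => ?_
          exact Sb_zero_cons j hj.1 (i+1) q
        rw [Finset.sum_congr rfl e2]
        have e3 : ∀ i ∈ range (w+1),
            ((comps (w-i)).map (fun q => -Sb (j-1) (i+1) q)).sum
              = -((comps (w-i)).map (fun q => Sb (j-1) (1+i) q)).sum := by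
          intro i hi
          rw [show (fun q => -Sb (j-1) (i+1) q) = (fun q => -Sb (j-1) (1+i) q) by
            funext q; rw [Nat.add_comm i 1]]
          exact list_sum_neg _ _
        rw [Finset.sum_congr rfl e3, Finset.sum_neg_distrib]
        rw [show -∑ i ∈ range (w+1), ((comps (w-i)).map (fun q => Sb (j-1) (1+i) q)).sum
            = -(Phi (j-1) 1 w) from rfl]
        rw [ih (j-1)]
      -- terms i ≥ 1 :
      have h1 : ∀ i ∈ range (w+1),
          ((comps (w+1-(i+1))).map (fun q => Sb n (1+(i+1)) q)).sum
            = ∑ j ∈ Icc 1 n, ((comps (w-i)).map (fun q => Sb j (1+i) q)).sum / j := by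
        intro i hi
        have e1 : (fun q => Sb n (1+(i+1)) q) = fun q => ∑ j ∈ Icc 1 n, Sb j (1+i) q / j := by
          funext q
          rw [show 1+(i+1) = (1+i)+1 by omega]
          exact Sb_succ n (1+i) q
        rw [show w+1-(i+1) = w-i by omega, e1, list_sum_comm]
        exact Finset.sum_congr rfl fun j _ => list_sum_div _ _ _
      rw [Finset.sum_congr rfl h1, h0, Finset.sum_comm, ← Finset.sum_add_distrib,
        Hs_single]
      refine Finset.sum_congr rfl fun j hj => ?_
      rw [mem_Icc] at hj
      have hP : ∑ i ∈ range (w+1), ((comps (w-i)).map (fun q => Sb j (1+i) q)).sum / (j:ℚ)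
          = Hs j [w+1] / j := by
        rw [← Finset.sum_div]
        rw [show ∑ i ∈ range (w+1), ((comps (w-i)).map (fun q => Sb j (1+i) q)).sum
            = Phi j 1 w from rfl]
        rw [ih j]
      rw [hP]
      have hd := Hs_single_diff j (w+1) hj.1
      have hj0 : (j:ℚ) ≠ 0 := by
        have : (0:ℚ) < j := by exact_mod_cast hj.1
        linarith
      rw [pow_succ]
      have e : Hs j [w+1] / (j:ℚ) + -Hs (j-1) [w+1] / j
          = (Hs j [w+1] - Hs (j-1) [w+1])/j := by ring
      rw [e, hd, div_div]

lemma main_a (w : ℕ) : ∀ a n : ℕ, Hs n (List.replicate a 1 ++ [w+1]) = Phi n (a+1) w := by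
  intro a
  induction a with
  | zero =>
      intro n
      rw [List.replicate_zero, List.nil_append, Phi_one]
  | succ a ih =>
      intro n
      rw [List.replicate_succ, List.cons_append, Hs, Phi_succ]
      refine Finset.sum_congr rfl fun k hk => ?_
      rw [ih k, pow_one]

lemma Hh_natList : ∀ (q : List ℕ), (∀ x ∈ q, 1 ≤ x) → ∀ n, Hh n (natList q) = Hq n q := by
  intro q
  induction q with
  | nil => intro _ n; rw [show natList [] = [] from rfl, Hh, Hq]
  | cons s r ih =>
      intro hpos n
      have hs : 1 ≤ s := hpos s (by simp)
      rw [show natList (s :: r) = (s:ℤ) :: natList r from rfl, Hh, Hq]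
      refine Finset.sum_congr rfl fun k hk => ?_
      rw [ih (fun x hx => hpos x (by simp [hx])) (k-1)]
      rw [show aSgn (s:ℤ) = 1 by rw [aSgn, if_pos (by exact_mod_cast hs)]]
      rw [show ((s:ℤ)).natAbs = s from Int.natAbs_natCast s]
      rw [one_pow]
      ring

lemma Hstar_natList : ∀ (q : List ℕ), (∀ x ∈ q, 1 ≤ x) → ∀ n, Hstar n (natList q) = Hs n q := by
  intro q
  induction q with
  | nil => intro _ n; rw [show natList [] = [] from rfl, Hstar, Hs]
  | cons s r ih =>
      intro hpos n
      have hs : 1 ≤ s := hpos s (by simp)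
      rw [show natList (s :: r) = (s:ℤ) :: natList r from rfl, Hstar, Hs]
      refine Finset.sum_congr rfl fun k hk => ?_
      rw [ih (fun x hx => hpos x (by simp [hx])) k]
      rw [show aSgn (s:ℤ) = 1 by rw [aSgn, if_pos (by exact_mod_cast hs)]]
      rw [show ((s:ℤ)).natAbs = s from Int.natAbs_natCast s]
      rw [one_pow]
      ring

theorem stmt14 (n a c : ℕ) (hn : 1 ≤ n) (hc : 1 ≤ c) :
    Hstar n (List.replicate a 1 ++ [(c : ℤ)])
      = -∑ i ∈ Finset.range c,
          ((comps (c - 1 - i)).map (fun q =>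
            ∑ k ∈ Finset.Icc 1 n,
              (-1 : ℚ) ^ k * (n.choose k) * Hh (k-1) (natList q)
                / (k : ℚ) ^ (a+1+i))).sum := by
  obtain ⟨w, rfl⟩ : ∃ w, c = w + 1 := ⟨c - 1, by omega⟩
  have hL : List.replicate a (1:ℤ) ++ [((w+1 : ℕ) : ℤ)]
      = natList (List.replicate a 1 ++ [w+1]) := by
    induction a with
    | zero => rfl
    | succ a ih =>
        rw [List.replicate_succ, List.replicate_succ, List.cons_append, List.cons_append,
          show natList (1 :: (List.replicate a 1 ++ [w+1]))
            = (1:ℤ) :: natList (List.replicate a 1 ++ [w+1]) from rfl, ih]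
  rw [hL, Hstar_natList _ (by
    intro x hx
    rcases List.mem_append.mp hx with h | h
    · rw [List.eq_of_mem_replicate h]
    · simp at h; omega)]
  rw [main_a w a n]
  have hR : ∀ i ∈ range (w+1),
      ((comps (w+1-1-i)).map (fun q =>
          ∑ k ∈ Finset.Icc 1 n,
            (-1 : ℚ) ^ k * (n.choose k) * Hh (k-1) (natList q) / (k : ℚ) ^ (a+1+i))).sum
        = -((comps (w-i)).map (fun q => Sb n (a+1+i) q)).sum := by
    intro i hi
    rw [show w+1-1-i = w-i from rfl]
    rw [← list_sum_neg]
    congr 1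
    refine List.map_congr_left fun q hq => ?_
    have hqpos := comps_pos (w-i) q hq
    rw [Sb]
    rw [← Finset.sum_neg_distrib]
    refine Finset.sum_congr rfl fun k hk => ?_
    rw [mem_Icc] at hk
    rw [Hh_natList q hqpos (k-1)]
    obtain ⟨k', rfl⟩ : ∃ k', k = k' + 1 := ⟨k - 1, by omega⟩
    simp only [Nat.add_sub_cancel, pow_succ]
    ring
  rw [Finset.sum_congr rfl hR, Finset.sum_neg_distrib, neg_neg]
  rfl
end

section
/- Let d ≥ 0 be an integer, e a real number with e > 1, and s a tuple of d nonzero integers. Then lim_{n→∞} ∑_{k=1}^{n} |H_{k-1}(s)|/k^e · (1 - C(n,k)/C(n+k,k)) = 0. -/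
open Finset

lemma harmonic_mono : Monotone harmonic := by
  intro m n h
  unfold harmonic
  apply Finset.sum_le_sum_of_subset_of_nonneg
  · exact Finset.range_subset_range.2 h
  · intro i _ _
    positivity

lemma abs_aSgn_pow (a : ℤ) (k : ℕ) : |aSgn a ^ k| = 1 := by
  unfold aSgn
  split <;> simp

lemma harmonic_nonneg (n : ℕ) : 0 ≤ harmonic n := by
  unfold harmonic
  apply Finset.sum_nonneg
  intro i _
  positivity

/-- Key bound: `|H_n(s)| ≤ (1 + harmonic n)^(length s)`. -/
lemma Hh_abs_le (s : List ℤ) (hs : ∀ x ∈ s, x ≠ 0) (n : ℕ) :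
    |Hh n s| ≤ (1 + harmonic n) ^ s.length := by
  induction s generalizing n with
  | nil => simp [Hh]
  | cons a r ih =>
    have ha : a ≠ 0 := hs a (by simp)
    have hr : ∀ x ∈ r, x ≠ 0 := fun x hx => hs x (by simp [hx])
    have hC : (0:ℚ) ≤ 1 + harmonic n := by linarith [harmonic_nonneg n]
    have key : ∀ k ∈ Finset.Icc 1 n,
        |aSgn a ^ k / (k : ℚ) ^ a.natAbs * Hh (k - 1) r|
          ≤ (k : ℚ)⁻¹ * (1 + harmonic n) ^ r.length := by
      intro k hk
      rw [Finset.mem_Icc] at hk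
      have hk1 : (1:ℚ) ≤ (k:ℚ) := by exact_mod_cast hk.1
      have hkpos : (0:ℚ) < (k:ℚ) := by linarith
      rw [abs_mul, abs_div, abs_aSgn_pow]
      have h1 : |(k : ℚ) ^ a.natAbs| = (k:ℚ) ^ a.natAbs := by
        rw [abs_pow, abs_of_pos hkpos]
      rw [h1]
      have hpow : (k:ℚ) ≤ (k:ℚ) ^ a.natAbs := by
        have : 1 ≤ a.natAbs := Int.natAbs_pos.mpr ha
        calc (k:ℚ) = (k:ℚ) ^ 1 := (pow_one _).symm
          _ ≤ (k:ℚ) ^ a.natAbs := pow_le_pow_right₀ hk1 this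
      have h2 : (1:ℚ) / (k:ℚ) ^ a.natAbs ≤ (k:ℚ)⁻¹ := by
        rw [one_div]
        exact inv_anti₀ hkpos hpow
      have h3 : |Hh (k-1) r| ≤ (1 + harmonic n) ^ r.length := by
        refine (ih hr (k-1)).trans ?_
        apply pow_le_pow_left₀
        · have := harmonic_nonneg (k-1)
          linarith
        · have : harmonic (k-1) ≤ harmonic n := harmonic_mono (by omega)
          linarith
      exact mul_le_mul h2 h3 (abs_nonneg _) (by positivity)
    calc |Hh n (a :: r)| ≤ ∑ k ∈ Finset.Icc 1 n,
          |aSgn a ^ k / (k : ℚ) ^ a.natAbs * Hh (k - 1) r| := by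
            rw [Hh]; exact Finset.abs_sum_le_sum_abs _ _
      _ ≤ ∑ k ∈ Finset.Icc 1 n, (k : ℚ)⁻¹ * (1 + harmonic n) ^ r.length :=
          Finset.sum_le_sum key
      _ = harmonic n * (1 + harmonic n) ^ r.length := by
          rw [← Finset.sum_mul, ← harmonic_eq_sum_Icc]
      _ ≤ (1 + harmonic n) * (1 + harmonic n) ^ r.length := by
          apply mul_le_mul_of_nonneg_right (by linarith) (by positivity)
      _ = (1 + harmonic n) ^ (a :: r).length := by
          rw [List.length_cons, pow_succ]; ring

/-- The binomial ratio tends to 1. -/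
lemma ratio_tendsto (k : ℕ) :
    Filter.Tendsto (fun n : ℕ => (n.choose k : ℝ) / ((n+k).choose k : ℝ))
      Filter.atTop (nhds 1) := by
  have key : ∀ n : ℕ, k ≤ n →
      (n.choose k : ℝ) / ((n+k).choose k : ℝ)
        = ∏ i ∈ Finset.range k, (((n - i : ℕ) : ℝ) / (((n - i : ℕ) : ℝ) + k)) := by
    intro n hn
    have hf : ((k.factorial : ℝ)) ≠ 0 := by positivity
    rw [← mul_div_mul_left ((n.choose k : ℝ)) _ hf]
    have h1 : (k.factorial : ℝ) * (n.choose k : ℝ) = (n.descFactorial k : ℝ) := by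
      rw [Nat.descFactorial_eq_factorial_mul_choose]; push_cast; ring
    have h2 : (k.factorial : ℝ) * ((n+k).choose k : ℝ) = ((n+k).descFactorial k : ℝ) := by
      rw [Nat.descFactorial_eq_factorial_mul_choose]; push_cast; ring
    rw [h1, h2, Nat.descFactorial_eq_prod_range, Nat.descFactorial_eq_prod_range]
    push_cast
    rw [← Finset.prod_div_distrib]
    apply Finset.prod_congr rfl
    intro i hi
    rw [Finset.mem_range] at hi
    have : n + k - i = (n - i) + k := by omega
    rw [this]
    push_cast
    ring_nf
  have lim : Filter.Tendsto
      (fun n : ℕ => ∏ i ∈ Finset.range k, (((n - i : ℕ) : ℝ) / (((n - i : ℕ) : ℝ) + k)))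
      Filter.atTop (nhds 1) := by
    have : (1:ℝ) = ∏ i ∈ Finset.range k, (1:ℝ) := by simp
    rw [this]
    apply tendsto_finset_prod
    intro i _
    exact (tendsto_natCast_div_add_atTop (k:ℝ)).comp (Filter.tendsto_sub_atTop_nat i)
  apply lim.congr'
  filter_upwards [Filter.eventually_ge_atTop k] with n hn
  exact (key n hn).symm

lemma ratio_mem (n k : ℕ) : 0 ≤ (n.choose k : ℝ) / ((n+k).choose k : ℝ) ∧
    (n.choose k : ℝ) / ((n+k).choose k : ℝ) ≤ 1 := by
  constructor
  · positivity
  · apply div_le_one_of_le₀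
    · exact_mod_cast Nat.choose_le_choose k (Nat.le_add_right n k)
    · positivity

theorem stmt15 (d : ℕ) (e : ℝ) (he : 1 < e) (s : List ℤ)
    (hd : s.length = d) (hs : ∀ x ∈ s, x ≠ 0) :
    Filter.Tendsto
      (fun n : ℕ => ∑ k ∈ Finset.Icc 1 n,
        ((|Hh (k-1) s| : ℚ) : ℝ) / (k : ℝ) ^ e
          * (1 - (n.choose k : ℝ) / ((n+k).choose k)))
      Filter.atTop (nhds 0) := by
  set e' : ℝ := (e + 1) / 2 with he'def
  have he'1 : 1 < e' := by rw [he'def]; linarith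
  have he'e : e' < e := by rw [he'def]; linarith
  -- the dominating function
  set bound : ℕ → ℝ := fun k => (2 + Real.log k) ^ d / (k : ℝ) ^ e with hbound
  -- the summand, extended by zero
  set f : ℕ → ℕ → ℝ := fun n k =>
    if k ∈ Finset.Icc 1 n then
      ((|Hh (k-1) s| : ℚ) : ℝ) / (k : ℝ) ^ e * (1 - (n.choose k : ℝ) / ((n+k).choose k))
    else 0 with hf
  -- basic facts about A k := |Hh (k-1) s| / k^e
  have hA_le_bound : ∀ k : ℕ, 1 ≤ k →
      ((|Hh (k-1) s| : ℚ) : ℝ) / (k : ℝ) ^ e ≤ bound k := by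
    intro k hk
    have hkpos : (0:ℝ) < (k:ℝ) := by exact_mod_cast hk
    have hkpow : (0:ℝ) < (k:ℝ) ^ e := Real.rpow_pos_of_pos hkpos e
    apply div_le_div₀ ?_ ?_ hkpow le_rfl
    · have hlog : 0 ≤ Real.log k := Real.log_natCast_nonneg k
      positivity
    -- numerator bound
    have h1 : ((|Hh (k-1) s| : ℚ) : ℝ) ≤ ((1 + harmonic (k-1) : ℚ) : ℝ) ^ d := by
      have := Hh_abs_le s hs (k-1)
      rw [hd] at this
      calc ((|Hh (k-1) s| : ℚ) : ℝ) ≤ (((1 + harmonic (k-1)) ^ d : ℚ) : ℝ) := by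
            exact_mod_cast this
        _ = ((1 + harmonic (k-1) : ℚ) : ℝ) ^ d := by push_cast; ring
    refine h1.trans ?_
    apply pow_le_pow_left₀
    · have : (0:ℚ) ≤ harmonic (k-1) := by
        rcases Nat.eq_zero_or_pos (k-1) with h | h
        · simp [h, harmonic_zero]
        · exact (harmonic_pos (Nat.pos_iff_ne_zero.mp h)).le
      push_cast
      have : (0:ℝ) ≤ ((harmonic (k-1) : ℚ) : ℝ) := by exact_mod_cast this
      linarith
    · -- (1 + harmonic (k-1) : ℝ) ≤ 2 + log k
      have h2 : ((harmonic (k-1) : ℚ) : ℝ) ≤ 1 + Real.log (k-1 : ℕ) :=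
        harmonic_le_one_add_log (k-1)
      push_cast
      have h3 : Real.log (k-1 : ℕ) ≤ Real.log k := by
        rcases Nat.eq_zero_or_pos (k-1) with h | h
        · simp [h]
          exact Real.log_natCast_nonneg k
        · apply Real.log_le_log (by exact_mod_cast h)
          exact_mod_cast Nat.sub_le k 1
      linarith
  have hbound_nonneg : ∀ k, 0 ≤ bound k := by
    intro k
    rcases Nat.eq_zero_or_pos k with h | h
    · simp [hbound, h]
      rw [Real.zero_rpow (by linarith : e ≠ 0)]
      simp
    · have hkpos : (0:ℝ) < (k:ℝ) := by exact_mod_cast h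
      have hlog : 0 ≤ Real.log k := Real.log_natCast_nonneg k
      have := Real.rpow_pos_of_pos hkpos e
      positivity
  -- summability of bound
  have hsum : Summable bound := by
    apply summable_of_isBigO_nat (Real.summable_nat_rpow.2 (by linarith : -e' < -1))
    rw [Asymptotics.isBigO_iff]
    refine ⟨1, ?_⟩
    -- eventually (2 + log x)^d ≤ x^(e - e') for real x
    set p : ℝ := (e - e') / (d + 1) with hp
    have hppos : 0 < p := by
      rw [hp]
      apply div_pos (by linarith)
      positivity
    have hlog : ∀ᶠ x : ℝ in Filter.atTop, 2 + Real.log x ≤ x ^ p := by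
      have h1 := (isLittleO_log_rpow_atTop hppos).bound (c := (1:ℝ)/2) (by norm_num)
      have h2 : ∀ᶠ x : ℝ in Filter.atTop, (4:ℝ) ≤ x ^ p :=
        (tendsto_rpow_atTop hppos).eventually_ge_atTop 4
      filter_upwards [h1, h2, Filter.eventually_ge_atTop (1:ℝ)] with x hx1 hx2 hx3
      have hxp : 0 ≤ x ^ p := by positivity
      rw [Real.norm_eq_abs, Real.norm_eq_abs, abs_of_nonneg hxp] at hx1
      have : Real.log x ≤ 1/2 * x ^ p := (le_abs_self _).trans hx1
      linarith
    have hmain : ∀ᶠ x : ℝ in Filter.atTop, (2 + Real.log x) ^ d ≤ x ^ (e - e') := by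
      filter_upwards [hlog, Filter.eventually_ge_atTop (1:ℝ)] with x hx1 hx2
      have hlognn : 0 ≤ Real.log x := Real.log_nonneg hx2
      calc (2 + Real.log x) ^ d ≤ (x ^ p) ^ d := by
            apply pow_le_pow_left₀ (by linarith) hx1
        _ = x ^ (p * d) := by rw [← Real.rpow_natCast (x ^ p) d, ← Real.rpow_mul (by linarith)]
        _ ≤ x ^ (e - e') := by
            apply Real.rpow_le_rpow_of_exponent_le hx2
            rw [hp]
            rw [div_mul_eq_mul_div, mul_comm]
            rw [div_le_iff₀ (by positivity : (0:ℝ) < (d:ℝ) + 1)]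
            have : (d:ℝ) ≤ (d:ℝ) + 1 := by linarith
            nlinarith [sub_pos.mpr he'e]
    have hnat : ∀ᶠ k : ℕ in Filter.atTop,
        (2 + Real.log k) ^ d ≤ (k:ℝ) ^ (e - e') :=
      tendsto_natCast_atTop_atTop.eventually hmain
    filter_upwards [hnat, Filter.eventually_ge_atTop 1] with k hk hk1
    have hkpos : (0:ℝ) < (k:ℝ) := by exact_mod_cast hk1
    have hkpow : (0:ℝ) < (k:ℝ) ^ e := Real.rpow_pos_of_pos hkpos e
    rw [Real.norm_eq_abs, Real.norm_eq_abs, abs_of_nonneg (hbound_nonneg k),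
      abs_of_nonneg (Real.rpow_nonneg hkpos.le _), one_mul]
    rw [hbound]
    rw [div_le_iff₀ hkpow]
    calc (2 + Real.log k) ^ d ≤ (k:ℝ) ^ (e - e') := hk
      _ = (k:ℝ) ^ (-e') * (k:ℝ) ^ e := by
          rw [← Real.rpow_add hkpos]; ring_nf
  -- pointwise limits
  have hpt : ∀ k : ℕ, Filter.Tendsto (fun n => f n k) Filter.atTop (nhds 0) := by
    intro k
    rcases Nat.eq_zero_or_pos k with h | h
    · have : ∀ n, f n k = 0 := by
        intro n; rw [hf]; simp [h]
      simp only [this]; exact tendsto_const_nhds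
    · have hev : ∀ᶠ n : ℕ in Filter.atTop, f n k =
          ((|Hh (k-1) s| : ℚ) : ℝ) / (k : ℝ) ^ e
            * (1 - (n.choose k : ℝ) / ((n+k).choose k)) := by
        filter_upwards [Filter.eventually_ge_atTop k] with n hn
        rw [hf]
        simp only
        rw [if_pos (Finset.mem_Icc.2 ⟨h, hn⟩)]
      have : Filter.Tendsto (fun n : ℕ =>
          ((|Hh (k-1) s| : ℚ) : ℝ) / (k : ℝ) ^ e
            * (1 - (n.choose k : ℝ) / ((n+k).choose k)))
          Filter.atTop (nhds (((|Hh (k-1) s| : ℚ) : ℝ) / (k : ℝ) ^ e * (1 - 1))) := by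
        exact Filter.Tendsto.const_mul _ (tendsto_const_nhds.sub (ratio_tendsto k))
      rw [show ((|Hh (k-1) s| : ℚ) : ℝ) / (k : ℝ) ^ e * (1 - 1) = 0 by ring] at this
      exact this.congr' (Filter.EventuallyEq.symm hev)
  -- domination
  have hdom : ∀ᶠ n : ℕ in Filter.atTop, ∀ k, ‖f n k‖ ≤ bound k := by
    apply Filter.Eventually.of_forall
    intro n k
    rw [hf]
    simp only
    split_ifs with hk
    · rw [Finset.mem_Icc] at hk
      have hA_nonneg : 0 ≤ ((|Hh (k-1) s| : ℚ) : ℝ) / (k : ℝ) ^ e := by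
        apply div_nonneg
        · exact_mod_cast abs_nonneg (Hh (k-1) s)
        · exact Real.rpow_nonneg (Nat.cast_nonneg k) e
      have hr := ratio_mem n k
      rw [Real.norm_eq_abs, abs_of_nonneg (by nlinarith [hr.1, hr.2] :
        (0:ℝ) ≤ ((|Hh (k-1) s| : ℚ) : ℝ) / (k : ℝ) ^ e
          * (1 - (n.choose k : ℝ) / ((n+k).choose k)))]
      calc ((|Hh (k-1) s| : ℚ) : ℝ) / (k : ℝ) ^ e
            * (1 - (n.choose k : ℝ) / ((n+k).choose k))
          ≤ ((|Hh (k-1) s| : ℚ) : ℝ) / (k : ℝ) ^ e * 1 := by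
            apply mul_le_mul_of_nonneg_left (by linarith [hr.1]) hA_nonneg
        _ = ((|Hh (k-1) s| : ℚ) : ℝ) / (k : ℝ) ^ e := mul_one _
        _ ≤ bound k := hA_le_bound k hk.1
    · rw [norm_zero]; exact hbound_nonneg k
  -- apply dominated convergence for sums
  have main := tendsto_tsum_of_dominated_convergence (g := fun _ : ℕ => (0:ℝ))
    hsum hpt hdom
  rw [tsum_zero] at main
  apply main.congr
  intro n
  rw [tsum_eq_sum (s := Finset.Icc 1 n) (fun k hk => by rw [hf]; simp only; rw [if_neg hk])]
  apply Finset.sum_congr rfl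
  intro k hk
  rw [hf]
  simp only
  rw [if_pos hk]
end
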